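/- Let G be a nilpotent group of nilpotency class k, let n be a positive integer, and let G^(n^k) denote the subgroup of G generated by all elements g^(n^k) with g ∈ G. Then for every h ∈ G^(n^k), the equation x^n = h has a solution in G. -/

import Mathlib

namespace RootProof
variable {G : Type*} [Group G]
open Subgroup
open scoped commutatorElement

abbrev lowerCentralSeries (G : Type*) [Group G] (i : ℕ) : Subgroup G :=
  (⊤ : Subgroup G).lowerCentralSeries i

lemma lowerCentralSeries_antitone : Antitone (lowerCentralSeries G) :=
  Subgroup.lowerCentralSeries_antitone ⊤

instance lowerCentralSeries_normal (i : ℕ) : (lowerCentralSeries G i).Normal :=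
  Subgroup.lowerCentralSeries_normal ⊤ i

/-- Graded power subgroup: generated by `u ^ n ^ (e + q - i)` for `u` in the `i`-th
lower central series term, `i ≥ q`. -/
def Th (G : Type*) [Group G] (n e q : ℕ) : Subgroup G :=
  Subgroup.closure {x : G | ∃ i, q ≤ i ∧ ∃ u ∈ lowerCentralSeries G i, x = u ^ n ^ (e + q - i)}

variable {n : ℕ}

lemma pow_mem_Th {u : G} {i q e E : ℕ} (hu : u ∈ lowerCentralSeries G i) (hq : q ≤ i)
    (hE : e + q - i ≤ E) : u ^ n ^ E ∈ Th G n e q := by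
  have h1 : u ^ n ^ (e + q - i) ∈ Th G n e q := subset_closure ⟨i, hq, u, hu, rfl⟩
  have h2 : n ^ E = n ^ (e + q - i) * n ^ (E - (e + q - i)) := by
    rw [← pow_add]; congr 1; omega
  rw [h2, pow_mul]
  exact pow_mem h1 _

lemma mem_Th_top (g : G) : g ∈ Th G n 0 0 := by
  have := pow_mem_Th (n := n) (E := 0) (q := 0) (e := 0) (i := 0)
    (mem_top g) le_rfl le_rfl
  simpa using this

instance Th_normal (n e q : ℕ) : (Th G n e q).Normal := by
  constructor
  intro x hx g
  induction hx using closure_induction with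
  | mem y hy =>
    obtain ⟨i, hq, u, hu, rfl⟩ := hy
    rw [← conj_pow]
    exact subset_closure ⟨i, hq, _, (lowerCentralSeries_normal i).conj_mem u hu g, rfl⟩
  | one => simpa using one_mem _
  | mul a b _ _ pa pb =>
    have : g * (a * b) * g⁻¹ = (g * a * g⁻¹) * (g * b * g⁻¹) := by group
    rw [this]; exact mul_mem pa pb
  | inv a _ pa =>
    have : g * a⁻¹ * g⁻¹ = (g * a * g⁻¹)⁻¹ := by group
    rw [this]; exact inv_mem pa

lemma Th_mono {e q e' q' : ℕ} (hq : q' ≤ q) (he : e' + q' ≤ e + q) :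
    Th G n e q ≤ Th G n e' q' := by
  rw [Th, closure_le]
  rintro x ⟨i, hqi, u, hu, rfl⟩
  exact pow_mem_Th hu (hq.trans hqi) (by omega)

lemma Th_le_lcs (e q : ℕ) : Th G n e q ≤ lowerCentralSeries G q := by
  rw [Th, closure_le]
  rintro x ⟨i, hqi, u, hu, rfl⟩
  exact pow_mem (lowerCentralSeries_antitone hqi hu) _

lemma Th_bot {k : ℕ} (hbot : lowerCentralSeries G k = ⊥) {e q : ℕ} (hq : k ≤ q) :
    Th G n e q = ⊥ := by
  rw [eq_bot_iff, ← hbot]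
  exact (Th_le_lcs e q).trans (lowerCentralSeries_antitone hq)


/-- Three subgroups lemma, `≤`-version. -/
lemma three_subgroups {H₁ H₂ H₃ N : Subgroup G} [N.Normal]
    (h1 : ⁅⁅H₂, H₃⁆, H₁⁆ ≤ N) (h2 : ⁅⁅H₃, H₁⁆, H₂⁆ ≤ N) : ⁅⁅H₁, H₂⁆, H₃⁆ ≤ N := by
  let π := QuotientGroup.mk' N
  have key : ∀ X : Subgroup G, X.map π = ⊥ ↔ X ≤ N := by
    intro X
    rw [Subgroup.map_eq_bot_iff, QuotientGroup.ker_mk']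
  rw [← key]
  rw [Subgroup.map_commutator, Subgroup.map_commutator]
  apply Subgroup.commutator_commutator_eq_bot_of_rotate
  · rw [← Subgroup.map_commutator, ← Subgroup.map_commutator, key]; exact h1
  · rw [← Subgroup.map_commutator, ← Subgroup.map_commutator, key]; exact h2

lemma lcs_comm : ∀ (j i : ℕ),
    ⁅lowerCentralSeries G i, lowerCentralSeries G j⁆ ≤ lowerCentralSeries G (i + j + 1) := by
  intro j
  induction j with
  | zero =>
    intro i
    have : lowerCentralSeries G (i + 1) = ⁅lowerCentralSeries G i, ⊤⁆ := rfl
    rw [show (lowerCentralSeries G 0) = (⊤ : Subgroup G) from rfl, this]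
  | succ j ih =>
    intro i
    have hsucc : lowerCentralSeries G (j + 1) = ⁅lowerCentralSeries G j, ⊤⁆ := rfl
    rw [hsucc, Subgroup.commutator_comm]
    apply three_subgroups
    · -- ⁅⁅⊤, L i⁆, L j⁆ ≤ L (i + (j+1) + 1)
      have e1 : ⁅(⊤ : Subgroup G), lowerCentralSeries G i⁆ = lowerCentralSeries G (i + 1) := by
        rw [Subgroup.commutator_comm]; rfl
      rw [e1]
      have := ih (i + 1)
      calc ⁅lowerCentralSeries G (i+1), lowerCentralSeries G j⁆
          ≤ lowerCentralSeries G (i + 1 + j + 1) := this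
        _ ≤ lowerCentralSeries G (i + (j + 1) + 1) := by
            apply lowerCentralSeries_antitone; omega
    ·
      have := ih i
      calc ⁅⁅lowerCentralSeries G i, lowerCentralSeries G j⁆, (⊤ : Subgroup G)⁆
          ≤ ⁅lowerCentralSeries G (i + j + 1), (⊤ : Subgroup G)⁆ :=
            Subgroup.commutator_mono this le_rfl
        _ = lowerCentralSeries G (i + j + 1 + 1) := rfl
        _ ≤ lowerCentralSeries G (i + (j + 1) + 1) := by
            apply lowerCentralSeries_antitone; omega

lemma mul_pow_mem_of_commutator {M : Subgroup G} [M.Normal] {a b : G} (h : ⁅a, b⁆ ∈ M)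
    (m : ℕ) : (a * b) ^ m * (a ^ m * b ^ m)⁻¹ ∈ M := by
  have hc : Commute ((QuotientGroup.mk' M) a) ((QuotientGroup.mk' M) b) := by
    rw [← commutatorElement_eq_one_iff_commute, ← map_commutatorElement]
    rw [QuotientGroup.mk'_apply, QuotientGroup.eq_one_iff]
    exact h
  have h2 : (QuotientGroup.mk' M) ((a * b) ^ m * (a ^ m * b ^ m)⁻¹) = 1 := by
    simp only [map_mul, map_pow, map_inv, hc.mul_pow]
    group
  rwa [QuotientGroup.mk'_apply, QuotientGroup.eq_one_iff] at h2


/-- Commutator of a power: `⁅x^m, a⁆ = ⁅x,a⁆^m` up to an error in `Y`. -/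
lemma powcomm {X Y : Subgroup G} [Y.Normal] (hXY : ∀ φ ∈ X, ∀ a : G, ⁅φ, a⁆ ∈ Y)
    {x a : G} (hx : ⁅x, a⁆ ∈ X) : ∀ m : ℕ, ∃ ξ ∈ Y, ⁅x ^ m, a⁆ = ⁅x, a⁆ ^ m * ξ := by
  intro m
  induction m with
  | zero => exact ⟨1, one_mem Y, by simp⟩
  | succ m ih =>
    obtain ⟨ξ, hξ, heq⟩ := ih
    set C := ⁅x, a⁆ with hC
    have t₁mem : ⁅(C⁻¹) ^ m, x⁆ ∈ Y := hXY _ (pow_mem (inv_mem hx) m) x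
    have t₂mem : x * ξ * x⁻¹ ∈ Y := ‹Y.Normal›.conj_mem ξ hξ x
    refine ⟨C⁻¹ * (⁅(C⁻¹) ^ m, x⁆ * (x * ξ * x⁻¹)) * C,
      ‹Y.Normal›.conj_mem' _ (mul_mem t₁mem t₂mem) C, ?_⟩
    have key : ⁅x ^ (m + 1), a⁆ = x * ⁅x ^ m, a⁆ * x⁻¹ * C := by
      rw [hC, pow_succ']
      simp only [commutatorElement_def]
      group
    rw [key, heq]
    have e1 : x * (C ^ m * ξ) * x⁻¹ = (x * C ^ m * x⁻¹) * (x * ξ * x⁻¹) := by group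
    have e2 : x * C ^ m * x⁻¹ = C ^ m * ⁅(C⁻¹) ^ m, x⁆ := by
      simp only [commutatorElement_def, inv_pow]
      group
    rw [e1, e2, pow_succ]
    group

/-- Power of a product: `(x*w)^m = x^m * w^m` up to an error in `Y`, when
commutators of `X ∋ w` with anything land in `Y`. -/
lemma pow_mul_aux {X Y : Subgroup G} [Y.Normal] (hXY : ∀ φ ∈ X, ∀ a : G, ⁅φ, a⁆ ∈ Y)
    {w : G} (hw : w ∈ X) (x : G) : ∀ m : ℕ, ∃ ξ ∈ Y, (x * w) ^ m = x ^ m * w ^ m * ξ := by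
  intro m
  induction m with
  | zero => exact ⟨1, one_mem Y, by simp⟩
  | succ m ih =>
    obtain ⟨ξ, hξ, heq⟩ := ih
    have t₁mem : ⁅(w⁻¹) ^ m, x⁻¹⁆ ∈ Y := hXY _ (pow_mem (inv_mem hw) m) x⁻¹
    have t₂mem : x⁻¹ * ξ * x ∈ Y := ‹Y.Normal›.conj_mem' ξ hξ x
    refine ⟨w⁻¹ * (⁅(w⁻¹) ^ m, x⁻¹⁆ * (x⁻¹ * ξ * x)) * w,
      ‹Y.Normal›.conj_mem' _ (mul_mem t₁mem t₂mem) w, ?_⟩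
    have key : (x * w) ^ (m + 1) = (x * w) ^ m * (x * w) := pow_succ _ _
    rw [key, heq]
    have e2 : x⁻¹ * w ^ m * x = w ^ m * ⁅(w⁻¹) ^ m, x⁻¹⁆ := by
      simp only [commutatorElement_def, inv_pow]
      group
    have target : x ^ m * w ^ m * ξ * (x * w) =
        x ^ (m + 1) * ((x⁻¹ * w ^ m * x) * (x⁻¹ * ξ * x)) * w := by
      rw [pow_succ]; group
    rw [target, e2, pow_succ]
    group


section Main
variable {n : ℕ}

lemma step_pow {s₀ : ℕ}
    (hA : ∀ s, s₀ ≤ s → ∀ e : ℕ, ∀ φ ∈ Th G n e s, φ ^ n ∈ Th G n (e + 1) s)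
    (hF : ∀ d s : ℕ, s₀ ≤ s → ∀ φ ∈ Th G n d s, ∀ a : G, ⁅φ, a⁆ ∈ Th G n d (s + 1))
    {d s : ℕ} (hs : s₀ ≤ s) {x a : G} (hxa : ⁅x, a⁆ ∈ Th G n d s) :
    ⁅x ^ n, a⁆ ∈ Th G n (d + 1) s := by
  obtain ⟨ξ, hξ, heq⟩ := powcomm (X := Th G n d s) (Y := Th G n d (s + 1))
    (fun φ hφ a => hF d s hs φ hφ a) hxa n
  rw [heq]
  exact mul_mem (hA s hs d _ hxa) (Th_mono (by omega) (by omega) hξ)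

lemma gen_comm {s₀ : ℕ}
    (hA : ∀ s, s₀ ≤ s → ∀ e : ℕ, ∀ φ ∈ Th G n e s, φ ^ n ∈ Th G n (e + 1) s)
    (hF : ∀ d s : ℕ, s₀ ≤ s → ∀ φ ∈ Th G n d s, ∀ a : G, ⁅φ, a⁆ ∈ Th G n d (s + 1)) :
    ∀ (E F i j : ℕ) (u v : G), u ∈ lowerCentralSeries G i → v ∈ lowerCentralSeries G j →
      s₀ ≤ i + j + 1 → ⁅u ^ n ^ E, v ^ n ^ F⁆ ∈ Th G n (E + F) (i + j + 1) := by
  have base0 : ∀ (F i j : ℕ) (u v : G), u ∈ lowerCentralSeries G i →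
      v ∈ lowerCentralSeries G j → s₀ ≤ i + j + 1 →
      ⁅u, v ^ n ^ F⁆ ∈ Th G n F (i + j + 1) := by
    intro F
    induction F with
    | zero =>
      intro i j u v hu hv _
      have hcomm : ⁅u, v⁆ ∈ lowerCentralSeries G (i + j + 1) :=
        lcs_comm j i (Subgroup.commutator_mem_commutator hu hv)
      have := pow_mem_Th (n := n) (E := 0) (q := i + j + 1) (e := 0) hcomm le_rfl (by omega)
      simpa using this
    | succ F ih =>
      intro i j u v hu hv hs
      have hC : ⁅v ^ n ^ F, u⁆ ∈ Th G n F (i + j + 1) := by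
        have := ih i j u v hu hv hs
        rw [← commutatorElement_inv]
        exact inv_mem this
      have := step_pow hA hF hs hC
      rw [← commutatorElement_inv]
      rw [show (v ^ n ^ F) ^ n = v ^ n ^ (F + 1) by rw [← pow_mul, ← pow_succ]] at this
      exact inv_mem this
  intro E
  induction E with
  | zero =>
    intro F i j u v hu hv hs
    have := base0 F i j u v hu hv hs
    simpa using this
  | succ E ih =>
    intro F i j u v hu hv hs
    have hC : ⁅u ^ n ^ E, v ^ n ^ F⁆ ∈ Th G n (E + F) (i + j + 1) := ih F i j u v hu hv hs
    have := step_pow hA hF hs hC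
    rw [show (u ^ n ^ E) ^ n = u ^ n ^ (E + 1) by rw [← pow_mul, ← pow_succ]] at this
    have harith : E + F + 1 = E + 1 + F := by omega
    rwa [harith] at this

lemma master {k : ℕ} (hbot : lowerCentralSeries G k = ⊥) : ∀ b : ℕ,
    (∀ q, k ≤ q + b → ∀ e : ℕ, ∀ φ ∈ Th G n e q, φ ^ n ∈ Th G n (e + 1) q) ∧
    (∀ e f q r : ℕ, k ≤ q + r + 1 + b →
      ⁅Th G n e q, Th G n f r⁆ ≤ Th G n (e + f) (q + r + 1)) := by
  intro b
  induction b with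
  | zero =>
    constructor
    · intro q hq e φ hφ
      rw [Th_bot hbot (by omega)] at hφ
      rw [Subgroup.mem_bot] at hφ
      subst hφ
      simpa using one_mem _
    · intro e f q r hqr
      have h1 : ⁅Th G n e q, Th G n f r⁆ ≤ lowerCentralSeries G (q + r + 1) :=
        le_trans (Subgroup.commutator_mono (Th_le_lcs e q) (Th_le_lcs f r)) (lcs_comm r q)
      have h2 : lowerCentralSeries G (q + r + 1) ≤ ⊥ := by
        rw [← hbot]; exact lowerCentralSeries_antitone (by omega)
      exact le_trans (le_trans h1 h2) bot_le
  | succ b IH =>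
    obtain ⟨IHA, IHF⟩ := IH
    have hApart : ∀ q, k ≤ q + (b + 1) → ∀ e : ℕ, ∀ φ ∈ Th G n e q,
        φ ^ n ∈ Th G n (e + 1) q := by
      intro q hq e φ hφ
      induction hφ using closure_induction with
      | mem y hy =>
        obtain ⟨i, hqi, u, hu, rfl⟩ := hy
        rw [← pow_mul, ← pow_succ]
        exact pow_mem_Th hu hqi (by omega)
      | one => simpa using one_mem _
      | mul a c ha hc pa pc =>
        have hcomm : ⁅a, c⁆ ∈ Th G n (e + 1) q := by
          have h1 : ⁅a, c⁆ ∈ ⁅Th G n e q, Th G n e q⁆ :=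
            Subgroup.commutator_mem_commutator ha hc
          have h2 : ⁅Th G n e q, Th G n e q⁆ ≤ Th G n (e + e) (q + q + 1) :=
            IHF e e q q (by omega)
          exact Th_mono (by omega) (by omega) (h2 h1)
        have h3 := mul_pow_mem_of_commutator hcomm n
        have : (a * c) ^ n = ((a * c) ^ n * (a ^ n * c ^ n)⁻¹) * (a ^ n * c ^ n) := by group
        rw [this]
        exact mul_mem h3 (mul_mem pa pc)
      | inv a ha pa =>
        rw [inv_pow]
        exact inv_mem pa
    refine ⟨hApart, ?_⟩
    intro e f q r hqr
    rw [Subgroup.commutator_le]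
    intro φ hφ ψ hψ
    induction hφ using closure_induction with
    | mem y hy =>
      obtain ⟨i, hqi, u, hu, rfl⟩ := hy
      induction hψ using closure_induction with
      | mem z hz =>
        obtain ⟨j, hrj, v, hv, rfl⟩ := hz
        have hgen := gen_comm (s₀ := q + r + 1)
          (fun s hs e' φ hφ => hApart s (by omega) e' φ hφ)
          (fun d s hs φ hφ a => by
            have h1 : ⁅Th G n d s, Th G n 0 0⁆ ≤ Th G n (d + 0) (s + 0 + 1) :=
              IHF d 0 s 0 (by omega)
            have h2 : ⁅φ, a⁆ ∈ ⁅Th G n d s, Th G n 0 0⁆ :=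
              Subgroup.commutator_mem_commutator hφ (mem_Th_top a)
            simpa using h1 h2)
          (e + q - i) (f + r - j) i j u v hu hv (by omega)
        exact Th_mono (by omega) (by omega) hgen
      | one => simpa using one_mem _
      | mul a c ha hc pa pc =>
        have key : ⁅u ^ n ^ (e + q - i), a * c⁆ =
            ⁅u ^ n ^ (e + q - i), a⁆ *
              (a * ⁅u ^ n ^ (e + q - i), c⁆ * a⁻¹) := by
          simp only [commutatorElement_def]; group
        rw [key]
        exact mul_mem pa ((Th_normal _ _ _).conj_mem _ pc a)
      | inv a ha pa =>
        have key : ⁅u ^ n ^ (e + q - i), a⁻¹⁆ =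
            a⁻¹ * ⁅u ^ n ^ (e + q - i), a⁆⁻¹ * a := by
          simp only [commutatorElement_def]; group
        rw [key]
        exact ((Th_normal _ _ _).conj_mem' _ (inv_mem pa) a)
    | one => simpa using one_mem _
    | mul a c ha hc pa pc =>
      have key : ⁅a * c, ψ⁆ = (a * ⁅c, ψ⁆ * a⁻¹) * ⁅a, ψ⁆ := by
        simp only [commutatorElement_def]; group
      rw [key]
      exact mul_mem ((Th_normal _ _ _).conj_mem _ pc a) pa
    | inv a ha pa =>
      have key : ⁅a⁻¹, ψ⁆ = a⁻¹ * ⁅a, ψ⁆⁻¹ * a := by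
        simp only [commutatorElement_def]; group
      rw [key]
      exact ((Th_normal _ _ _).conj_mem' _ (inv_mem pa) a)


lemma final {k : ℕ} (hbot : lowerCentralSeries G k = ⊥) :
    ∀ d m : ℕ, k ≤ m + d → ∀ (x h : G), h ∈ Th G n (k - m) m →
      ∃ y : G, y ^ n = x ^ n * h := by
  have hA_all : ∀ q e : ℕ, ∀ φ ∈ Th G n e q, φ ^ n ∈ Th G n (e + 1) q :=
    fun q e φ hφ => (master hbot k).1 q (by omega) e φ hφ
  have hF_all : ∀ e f q r : ℕ, ⁅Th G n e q, Th G n f r⁆ ≤ Th G n (e + f) (q + r + 1) :=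
    fun e f q r => (master hbot k).2 e f q r (by omega)
  intro d
  induction d with
  | zero =>
    intro m hm x h hh
    rw [Th_bot hbot (by omega), Subgroup.mem_bot] at hh
    exact ⟨x, by rw [hh, mul_one]⟩
  | succ d IH =>
    intro m hm x h hh
    by_cases hmk : k ≤ m
    · rw [Th_bot hbot hmk, Subgroup.mem_bot] at hh
      exact ⟨x, by rw [hh, mul_one]⟩
    -- m < k
    · have hXY : ∀ z ∈ Th G n (k - m - 1) m, ∀ a : G, ⁅z, a⁆ ∈ Th G n (k - m - 1) (m + 1) := by
        intro z hz a
        have h1 : ⁅Th G n (k - m - 1) m, Th G n 0 0⁆ ≤ Th G n (k - m - 1 + 0) (m + 0 + 1) :=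
          hF_all (k - m - 1) 0 m 0
        have h2 := h1 (Subgroup.commutator_mem_commutator hz (mem_Th_top a))
        simpa using h2
      -- Subclaim A: absorb one generator at a time
      have step : ∀ h₀ ∈ Th G n (k - m) m,
          (∀ x₀ : G, ∀ φ ∈ Th G n (k - m - 1) (m + 1), ∃ x' : G, ∃ φ' ∈ Th G n (k - m - 1) (m + 1),
            x₀ ^ n * φ * h₀ = x' ^ n * φ') ∧
          (∀ x₀ : G, ∀ φ ∈ Th G n (k - m - 1) (m + 1), ∃ x' : G, ∃ φ' ∈ Th G n (k - m - 1) (m + 1),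
            x₀ ^ n * φ * h₀⁻¹ = x' ^ n * φ') := by
        have Pgen : ∀ (u : G) (i : ℕ), u ∈ lowerCentralSeries G i → m ≤ i →
            ∀ x₀ : G, ∀ φ ∈ Th G n (k - m - 1) (m + 1), ∃ x' : G,
              ∃ φ' ∈ Th G n (k - m - 1) (m + 1),
              x₀ ^ n * φ * (u ^ n ^ (k - m + m - i)) = x' ^ n * φ' := by
          intro u i hu hmi x₀ φ hφ
          by_cases hi : m + 1 ≤ i
          · -- generator already lies one level deeper
            refine ⟨x₀, φ * u ^ n ^ (k - m + m - i), mul_mem hφ ?_, by group⟩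
            exact pow_mem_Th hu hi (by omega)
          · -- i = m
            have him : i = m := by omega
            subst him
            set c := u ^ n ^ (k - i + i - i) with hc
            set w := u ^ n ^ (k - i - 1) with hw
            have hwX : w ∈ Th G n (k - i - 1) i := pow_mem_Th hu le_rfl (by omega)
            have hwn : w ^ n = c := by
              rw [hw, hc, ← pow_mul, ← pow_succ]
              congr 2
              omega
            obtain ⟨ξ, hξ, heq⟩ := pow_mul_aux hXY hwX x₀ n
            -- x₀^n * φ * c = (x₀*w)^n * (ξ⁻¹ * c⁻¹ * φ * c)
            refine ⟨x₀ * w, ξ⁻¹ * (c⁻¹ * φ * c), ?_, ?_⟩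
            · exact mul_mem (inv_mem hξ) ((Th_normal _ _ _).conj_mem' _ hφ c)
            · rw [heq, hwn]
              group
        have Pmul : ∀ h₁ h₂ : G,
            (∀ x₀ : G, ∀ φ ∈ Th G n (k - m - 1) (m + 1), ∃ x' : G,
              ∃ φ' ∈ Th G n (k - m - 1) (m + 1), x₀ ^ n * φ * h₁ = x' ^ n * φ') →
            (∀ x₀ : G, ∀ φ ∈ Th G n (k - m - 1) (m + 1), ∃ x' : G,
              ∃ φ' ∈ Th G n (k - m - 1) (m + 1), x₀ ^ n * φ * h₂ = x' ^ n * φ') →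
            (∀ x₀ : G, ∀ φ ∈ Th G n (k - m - 1) (m + 1), ∃ x' : G,
              ∃ φ' ∈ Th G n (k - m - 1) (m + 1), x₀ ^ n * φ * (h₁ * h₂) = x' ^ n * φ') := by
          intro h₁ h₂ P1 P2 x₀ φ hφ
          obtain ⟨x₁, φ₁, hφ₁, e1⟩ := P1 x₀ φ hφ
          obtain ⟨x₂, φ₂, hφ₂, e2⟩ := P2 x₁ φ₁ hφ₁
          refine ⟨x₂, φ₂, hφ₂, ?_⟩
          rw [← mul_assoc, e1, e2]
        intro h₀ hh₀
        induction hh₀ using closure_induction with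
        | mem y hy =>
          obtain ⟨i, hmi, u, hu, rfl⟩ := hy
          constructor
          · exact Pgen u i hu hmi
          · have : (u ^ n ^ (k - m + m - i))⁻¹ = (u⁻¹) ^ n ^ (k - m + m - i) := by
              rw [inv_pow]
            rw [this]
            exact Pgen u⁻¹ i (inv_mem hu) hmi
        | one =>
          constructor <;>
            · intro x₀ φ hφ
              exact ⟨x₀, φ, hφ, by group⟩
        | mul a c ha hc pa pc =>
          refine ⟨Pmul a c pa.1 pc.1, ?_⟩
          have : (a * c)⁻¹ = c⁻¹ * a⁻¹ := by group
          rw [this]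
          exact Pmul c⁻¹ a⁻¹ pc.2 pa.2
        | inv a ha pa =>
          refine ⟨pa.2, ?_⟩
          rw [inv_inv]
          exact pa.1
      obtain ⟨x', φ', hφ', heq⟩ := (step h hh).1 x 1 (one_mem _)
      have hφ'' : φ' ∈ Th G n (k - (m + 1)) (m + 1) := by
        rw [show k - (m + 1) = k - m - 1 by omega]
        exact hφ'
      obtain ⟨y, hy⟩ := IH (m + 1) (by omega) x' φ' hφ''
      refine ⟨y, ?_⟩
      rw [hy, ← heq, mul_one]

end Main
end RootProof

theorem root_exists_of_mem_power_subgroup (G : Type*) [Group G] [Group.IsNilpotent G]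
    (k : ℕ) (hk : Group.nilpotencyClass G = k) (n : ℕ) (hn : 0 < n)
    (h : G) (hh : h ∈ Subgroup.closure {x : G | ∃ g : G, x = g ^ (n ^ k)}) :
    ∃ x : G, x ^ n = h := by
  have hbot : RootProof.lowerCentralSeries G k = ⊥ := by
    rw [← hk]; exact Subgroup.lowerCentralSeries_nilpotencyClass
  have hsub : h ∈ RootProof.Th G n k 0 := by
    refine Subgroup.closure_mono ?_ hh
    rintro x ⟨g, rfl⟩
    exact ⟨0, le_rfl, g, Subgroup.mem_top g, by norm_num⟩
  have hfin := RootProof.final hbot k 0 (by omega) 1 h (by simpa using hsub)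
  obtain ⟨y, hy⟩ := hfin
  exact ⟨y, by simpa using hy⟩
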